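/- Let K be a field and P a standard-graded polynomial ring over K in finitely many variables. Let F be a finitely generated graded free P-module whose basis elements have non-negative degrees, T a graded submodule of F, and ℓ ∈ P a linear form such that T : ℓ^r = T : ℓ^{r+1} for some integer r ≥ 0. Then the Hilbert series satisfy H_{F/T}(t) = Σ_{e=0}^{r−1} H_{F/((T:ℓ^e) + ℓF)}(t)·t^e + H_{F/((T:ℓ^r) + ℓF)}(t)·t^r/(1−t), an identity in ℤ[[t]] (where 1/(1−t) = Σ_{k≥0} t^k). -/

import Mathlib

/-!  Lemma 4.5: repeated division by a linear form and Hilbert series.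
`P = K[x_1,…,x_ν]` is a standard-graded polynomial ring over a field `K`, and
`F = ⊕_{α ∈ ι} P e_α` a finitely generated graded free `P`-module whose basis elements
`e_α` have non-negative degrees `deg α`. -/

noncomputable section

open scoped Classical

variable (K : Type) [Field K] (ν : ℕ) (ι : Type) [Fintype ι] (deg : ι → ℕ)

/-- A finitely generated graded free module `F = ⊕_{α ∈ ι} P e_α` over
`P = K[x_1,…,x_ν]`. -/
abbrev FreeP (K : Type) [Field K] (ν : ℕ) (ι : Type) : Type :=
  ι →₀ MvPolynomial (Fin ν) K

/-- The degree-`j` homogeneous component of `F` as a `K`-subspace: the span of the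
monomials `x^u e_α` with `|u| + deg α = j`. -/
def homogCompF (j : ℕ) : Submodule K (FreeP K ν ι) :=
  Submodule.span K
    {x | ∃ (u : Fin ν →₀ ℕ) (α : ι), (u.sum fun _ e => e) + deg α = j ∧
      x = Finsupp.single α (MvPolynomial.monomial u (1 : K))}

/-- A graded (i.e. homogeneous) submodule of `F`: one generated by homogeneous
elements. -/
def IsGradedSub (T : Submodule (MvPolynomial (Fin ν) K) (FreeP K ν ι)) : Prop :=
  ∃ S : Set (FreeP K ν ι), (∀ x ∈ S, ∃ j, x ∈ homogCompF K ν ι deg j) ∧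
    T = Submodule.span (MvPolynomial (Fin ν) K) S

/-- The colon submodule `T : f = {q ∈ F : f·q ∈ T}`. -/
def colonBy (T : Submodule (MvPolynomial (Fin ν) K) (FreeP K ν ι))
    (f : MvPolynomial (Fin ν) K) : Submodule (MvPolynomial (Fin ν) K) (FreeP K ν ι) :=
  Submodule.comap (LinearMap.lsmul (MvPolynomial (Fin ν) K) (FreeP K ν ι) f) T

/-- The Hilbert series `H_{F/T}(t) = Σ_j dim_K [F/T]_j t^j ∈ ℤ[[t]]`, where the
degree-`j` component of the graded quotient is the image of `[F]_j` in `F/T`. -/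
def hilbQ (T : Submodule (MvPolynomial (Fin ν) K) (FreeP K ν ι)) : PowerSeries ℤ :=
  PowerSeries.mk fun j =>
    (Module.finrank K
      (Submodule.map (Submodule.restrictScalars K T).mkQ (homogCompF K ν ι deg j)) : ℤ)


/-! ### Auxiliary infrastructure -/

set_option linter.unusedSectionVars false
set_option maxHeartbeats 1000000

open MvPolynomial

/-- Pointwise homogeneity predicate: every coordinate is homogeneous of the right degree. -/
def memHC (j : ℕ) (x : FreeP K ν ι) : Prop :=
  ∀ α, (x α).IsHomogeneous (j - deg α) ∧ (deg α ≤ j ∨ x α = 0)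

lemma degree_eq_sum (u : Fin ν →₀ ℕ) : (u.sum fun _ e => e) = u.degree := rfl

lemma homogCompF_iff_memHC {j : ℕ} {x : FreeP K ν ι} :
    x ∈ homogCompF K ν ι deg j ↔ memHC K ν ι deg j x := by
  constructor
  · intro hx
    induction hx using Submodule.span_induction with
    | mem x hx =>
      obtain ⟨u, α, hu, rfl⟩ := hx
      intro β
      by_cases hβ : β = α
      · subst hβ
        rw [Finsupp.single_eq_same]
        constructor
        · exact isHomogeneous_monomial 1 (by rw [← degree_eq_sum]; omega)
        · left; omega
      · rw [Finsupp.single_eq_of_ne' (Ne.symm hβ)]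
        exact ⟨isHomogeneous_zero _ _ _, Or.inr rfl⟩
    | zero => intro α; exact ⟨isHomogeneous_zero _ _ _, Or.inr rfl⟩
    | add x y _ _ hx hy =>
      intro α
      refine ⟨(hx α).1.add (hy α).1, ?_⟩
      rcases (hx α).2 with h | h
      · exact Or.inl h
      rcases (hy α).2 with h' | h'
      · exact Or.inl h'
      · exact Or.inr (by simp [h, h'])
    | smul c x _ hx =>
      intro α
      refine ⟨?_, ?_⟩
      · exact Submodule.smul_mem (homogeneousSubmodule (Fin ν) K _) c (hx α).1
      · rcases (hx α).2 with h | h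
        · exact Or.inl h
        · exact Or.inr (by show c • (x α) = 0; simp [h])
  · intro hx
    have hx' : x = ∑ α ∈ x.support, Finsupp.single α (x α) :=
      (Finsupp.sum_single x).symm
    rw [hx']
    refine Submodule.sum_mem _ fun α hα => ?_
    have hα' : x α ≠ 0 := Finsupp.mem_support_iff.mp hα
    have hdeg : deg α ≤ j := (hx α).2.resolve_right hα'
    have hh := (hx α).1
    have : Finsupp.single α (x α)
        = ∑ u ∈ (x α).support, Finsupp.single α (monomial u (coeff u (x α))) := by
      rw [← Finsupp.single_finset_sum, support_sum_monomial_coeff]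
    rw [this]
    refine Submodule.sum_mem _ fun u hu => ?_
    have hud : u.degree = j - deg α := by
      rw [Finsupp.degree_eq_weight_one]; exact hh (Finsupp.mem_support_iff.mp hu)
    have : monomial u (coeff u (x α)) = (coeff u (x α)) • monomial u (1:K) := by
      rw [smul_monomial, smul_eq_mul, mul_one]
    rw [this, ← Finsupp.smul_single]
    exact Submodule.smul_mem _ _ (Submodule.subset_span
      ⟨u, α, by rw [degree_eq_sum]; omega, rfl⟩)

/-- homogeneous component of a product with a homogeneous factor -/
lemma hc_mul {f : MvPolynomial (Fin ν) K} {d : ℕ}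
    (hf : f.IsHomogeneous d) (n : ℕ) (p : MvPolynomial (Fin ν) K) :
    homogeneousComponent (n + d) (f * p) = f * homogeneousComponent n p := by
  ext m
  rw [coeff_homogeneousComponent, coeff_mul, coeff_mul]
  have hterm : ∀ uv ∈ Finset.HasAntidiagonal.antidiagonal m,
      coeff uv.1 f * coeff uv.2 (homogeneousComponent n p)
        = if m.degree = n + d then coeff uv.1 f * coeff uv.2 p else 0 := by
    rintro ⟨u, v⟩ huv
    rw [Finset.HasAntidiagonal.mem_antidiagonal] at huv
    rw [coeff_homogeneousComponent]
    by_cases hu : coeff u f = 0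
    · simp [hu]
    · have hud : u.degree = d := by
        rw [Finsupp.degree_eq_weight_one]; exact hf hu
      have hm : m.degree = u.degree + v.degree := by
        rw [← huv, Finsupp.degree_eq_weight_one, map_add]
      by_cases hv : v.degree = n
      · have : m.degree = n + d := by omega
        simp [hv, this]
      · have : ¬ m.degree = n + d := by omega
        simp [hv, this]
  rw [Finset.sum_congr rfl hterm]
  split
  · rfl
  · simp

lemma hc_mul_lt {f : MvPolynomial (Fin ν) K} {d : ℕ}
    (hf : f.IsHomogeneous d) {n : ℕ} (hn : n < d) (p : MvPolynomial (Fin ν) K) :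
    homogeneousComponent n (f * p) = 0 := by
  ext m
  rw [coeff_homogeneousComponent]
  split
  · next hm =>
    rw [coeff_mul]
    refine Finset.sum_eq_zero ?_
    rintro ⟨u, v⟩ huv
    rw [Finset.HasAntidiagonal.mem_antidiagonal] at huv
    by_cases hu : coeff u f = 0
    · simp [hu]
    · have hud : u.degree = d := by
        rw [Finsupp.degree_eq_weight_one]; exact hf hu
      have : m.degree = u.degree + v.degree := by
        rw [← huv, Finsupp.degree_eq_weight_one, map_add]
      omega
  · simp

/-- The degree-`j` projection of `F`, as a `K`-linear map. -/
def pF (j : ℕ) : FreeP K ν ι →ₗ[K] FreeP K ν ι where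
  toFun x := Finsupp.onFinset x.support
    (fun α => if deg α ≤ j then homogeneousComponent (j - deg α) (x α) else 0)
    (fun α h => Finsupp.mem_support_iff.mpr (fun h0 => h (by simp [h0])))
  map_add' x y := by
    ext α
    simp only [Finsupp.onFinset_apply, Finsupp.add_apply]
    split <;> simp
  map_smul' c x := by
    ext α
    simp only [Finsupp.onFinset_apply, Finsupp.smul_apply, RingHom.id_apply]
    split <;> simp

lemma pF_apply (j : ℕ) (x : FreeP K ν ι) (α : ι) :
    pF K ν ι deg j x α =
      if deg α ≤ j then MvPolynomial.homogeneousComponent (j - deg α) (x α) else 0 := rfl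

lemma smul_apply' (f : MvPolynomial (Fin ν) K) (y : FreeP K ν ι) (α : ι) :
    (f • y) α = f * y α := rfl

lemma pF_memHC (j : ℕ) (x : FreeP K ν ι) : memHC K ν ι deg j (pF K ν ι deg j x) := by
  intro α
  rw [pF_apply]
  split
  · exact ⟨homogeneousComponent_isHomogeneous _ _, Or.inl (by omega)⟩
  · exact ⟨isHomogeneous_zero _ _ _, Or.inr rfl⟩

lemma pF_of_memHC {j : ℕ} {x : FreeP K ν ι} (hx : memHC K ν ι deg j x) :
    pF K ν ι deg j x = x := by
  ext α
  rw [pF_apply]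
  rcases (hx α).2 with h | h
  · rw [if_pos h, homogeneousComponent_of_mem (hx α).1, if_pos rfl]
  · split <;> simp [h]

lemma pF_of_memHC_ne {j k : ℕ} {x : FreeP K ν ι} (hx : memHC K ν ι deg k x) (hjk : j ≠ k) :
    pF K ν ι deg j x = 0 := by
  ext α
  rw [pF_apply]
  rcases (hx α).2 with h | h
  · rw [Finsupp.coe_zero, Pi.zero_apply]
    split
    · next h' =>
      rw [homogeneousComponent_of_mem (hx α).1, if_neg (by omega)]
    · rfl
  · split <;> simp [h]

lemma pF_smul {f : MvPolynomial (Fin ν) K} {d : ℕ} (hf : f.IsHomogeneous d)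
    (n : ℕ) (y : FreeP K ν ι) :
    pF K ν ι deg (n + d) (f • y) = f • pF K ν ι deg n y := by
  refine Finsupp.ext fun α => ?_
  rw [pF_apply, smul_apply', smul_apply', pF_apply]
  by_cases h1 : deg α ≤ n
  · rw [if_pos (by omega), if_pos h1]
    have : n + d - deg α = (n - deg α) + d := by omega
    rw [this, hc_mul K ν hf]
  · rw [if_neg h1, mul_zero]
    by_cases h2 : deg α ≤ n + d
    · rw [if_pos h2]
      exact hc_mul_lt K ν hf (show n + d - deg α < d by omega) _
    · rw [if_neg h2]

lemma pF_smul_lt {f : MvPolynomial (Fin ν) K} {d : ℕ} (hf : f.IsHomogeneous d)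
    {n : ℕ} (hn : n < d) (y : FreeP K ν ι) :
    pF K ν ι deg n (f • y) = 0 := by
  refine Finsupp.ext fun α => ?_
  rw [Finsupp.coe_zero, Pi.zero_apply, pF_apply, smul_apply']
  split
  · exact hc_mul_lt K ν hf (show n - deg α < d by omega) _
  · rfl

/-- closed under taking homogeneous components -/
def CP (T : Submodule (MvPolynomial (Fin ν) K) (FreeP K ν ι)) : Prop :=
  ∀ x ∈ T, ∀ j, pF K ν ι deg j x ∈ T

lemma CP_of_graded {T : Submodule (MvPolynomial (Fin ν) K) (FreeP K ν ι)}
    (hT : IsGradedSub K ν ι deg T) : CP K ν ι deg T := by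
  obtain ⟨S, hS, rfl⟩ := hT
  intro x hx
  induction hx using Submodule.span_induction with
  | mem x hx =>
    intro j
    obtain ⟨k, hk⟩ := hS x hx
    rw [homogCompF_iff_memHC] at hk
    by_cases hjk : j = k
    · subst hjk
      rw [pF_of_memHC K ν ι deg hk]
      exact Submodule.subset_span hx
    · rw [pF_of_memHC_ne K ν ι deg hk hjk]
      exact Submodule.zero_mem _
  | zero => intro j; rw [map_zero]; exact Submodule.zero_mem _
  | add x y _ _ hx hy => intro j; rw [map_add]; exact Submodule.add_mem _ (hx j) (hy j)
  | smul a x _ hx =>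
    intro j
    have hxa : a • x = ∑ i ∈ Finset.range (a.totalDegree + 1),
        (homogeneousComponent i a) • x := by
      rw [← Finset.sum_smul, sum_homogeneousComponent]
    rw [hxa, map_sum]
    refine Submodule.sum_mem _ fun i _ => ?_
    by_cases hij : i ≤ j
    · have hj : j = (j - i) + i := by omega
      rw [hj, pF_smul K ν ι deg (homogeneousComponent_isHomogeneous i a) (j - i) x]
      exact Submodule.smul_mem _ _ (hx (j - i))
    · rw [pF_smul_lt K ν ι deg (homogeneousComponent_isHomogeneous i a) (by omega) x]
      exact Submodule.zero_mem _

lemma CP_colon {T : Submodule (MvPolynomial (Fin ν) K) (FreeP K ν ι)}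
    (hT : CP K ν ι deg T) {ℓ : MvPolynomial (Fin ν) K} (hℓ : ℓ.IsHomogeneous 1) :
    CP K ν ι deg (colonBy K ν ι T ℓ) := by
  intro x hx j
  have : ℓ • pF K ν ι deg j x = pF K ν ι deg (j + 1) (ℓ • x) :=
    (pF_smul K ν ι deg hℓ j x).symm
  show ℓ • pF K ν ι deg j x ∈ T
  rw [this]
  exact hT _ hx _

lemma smulTop_eq_range (ℓ : MvPolynomial (Fin ν) K) :
    (Ideal.span {ℓ} • (⊤ : Submodule (MvPolynomial (Fin ν) K) (FreeP K ν ι)))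
      = LinearMap.range (LinearMap.lsmul (MvPolynomial (Fin ν) K) (FreeP K ν ι) ℓ) := by
  apply le_antisymm
  · refine Submodule.smul_le.mpr ?_
    rintro r hr n -
    obtain ⟨p, rfl⟩ := Ideal.mem_span_singleton'.mp hr
    exact ⟨p • n, by rw [LinearMap.lsmul_apply, smul_smul, mul_comm]⟩
  · rintro x ⟨y, rfl⟩
    exact Submodule.smul_mem_smul (Ideal.mem_span_singleton_self ℓ) trivial

instance homogCompF_fd (j : ℕ) : FiniteDimensional K (homogCompF K ν ι deg j) := by
  apply FiniteDimensional.span_of_finite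
  have hfin : ({p : (Fin ν →₀ ℕ) × ι | p.1.degree ≤ j}).Finite := by
    have := Finsupp.finite_of_degree_le (σ := Fin ν) j
    exact (this.prod (Set.finite_univ (α := ι))).subset (fun p hp => ⟨hp, trivial⟩)
  refine Set.Finite.subset (hfin.image
    (fun p => Finsupp.single p.2 (MvPolynomial.monomial p.1 (1 : K)))) ?_
  rintro x ⟨u, α, hu, rfl⟩
  exact ⟨(u, α), by simp only [Set.mem_setOf_eq]; have h : u.degree + deg α = j := hu; omega, rfl⟩

/-- rank–nullity for the image of a submodule under a linear map -/
lemma dim_map_add {M N : Type} [AddCommGroup M] [Module K M] [AddCommGroup N] [Module K N]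
    (g : M →ₗ[K] N) (U : Submodule K M) [FiniteDimensional K U] :
    Module.finrank K (Submodule.map g U) + Module.finrank K ((LinearMap.ker g) ⊓ U : Submodule K M)
      = Module.finrank K U := by
  have h1 : Submodule.map g U = LinearMap.range (g ∘ₗ U.subtype) := by
    rw [LinearMap.range_comp, Submodule.range_subtype]
  have h2 : LinearMap.ker (g ∘ₗ U.subtype) = Submodule.comap U.subtype (LinearMap.ker g ⊓ U) := by
    rw [LinearMap.ker_comp]
    ext ⟨x, hx⟩
    simp [hx]
  have h3 := LinearMap.finrank_range_add_finrank_ker (g ∘ₗ U.subtype)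
  rw [h1, ← h3, h2]
  congr 1
  exact (Submodule.comapSubtypeEquivOfLe inf_le_right).finrank_eq.symm

section Step
variable {T : Submodule (MvPolynomial (Fin ν) K) (FreeP K ν ι)}
  {ℓ : MvPolynomial (Fin ν) K}

/-- the multiplication-by-ℓ map as a K-linear map -/
def phiL (ℓ : MvPolynomial (Fin ν) K) : FreeP K ν ι →ₗ[K] FreeP K ν ι :=
  (LinearMap.lsmul (MvPolynomial (Fin ν) K) (FreeP K ν ι) ℓ).restrictScalars K

lemma phiL_apply (ℓ : MvPolynomial (Fin ν) K) (x : FreeP K ν ι) :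
    phiL K ν ι ℓ x = ℓ • x := rfl

lemma c1 (hℓ : ℓ.IsHomogeneous 1) (j : ℕ) :
    Submodule.map (phiL K ν ι ℓ) (homogCompF K ν ι deg j) ≤ homogCompF K ν ι deg (j + 1) := by
  rintro x ⟨w, hw, rfl⟩
  replace hw : w ∈ homogCompF K ν ι deg j := hw
  rw [homogCompF_iff_memHC] at hw
  rw [homogCompF_iff_memHC]
  rw [phiL_apply]
  have h1 : ℓ • w = pF K ν ι deg (j + 1) (ℓ • w) := by
    rw [pF_smul K ν ι deg hℓ j w, pF_of_memHC K ν ι deg hw]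
  rw [h1]
  exact pF_memHC K ν ι deg (j + 1) (ℓ • w)

lemma c2 (hT : CP K ν ι deg T) (hℓ : ℓ.IsHomogeneous 1) (j : ℕ) :
    Submodule.restrictScalars K
        (T ⊔ Ideal.span {ℓ} • (⊤ : Submodule (MvPolynomial (Fin ν) K) (FreeP K ν ι)))
        ⊓ homogCompF K ν ι deg (j + 1)
      = (Submodule.restrictScalars K T ⊓ homogCompF K ν ι deg (j + 1))
          ⊔ Submodule.map (phiL K ν ι ℓ) (homogCompF K ν ι deg j) := by
  apply le_antisymm
  · rintro x ⟨hx1, hx2⟩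
    replace hx1 : x ∈ T ⊔ Ideal.span {ℓ} • (⊤ : Submodule (MvPolynomial (Fin ν) K) (FreeP K ν ι)) := hx1
    replace hx2 : x ∈ homogCompF K ν ι deg (j + 1) := hx2
    rw [smulTop_eq_range] at hx1
    obtain ⟨t, ht, s, hs, rfl⟩ := Submodule.mem_sup.mp hx1
    obtain ⟨y, rfl⟩ := hs
    rw [LinearMap.lsmul_apply] at *
    have hdec : t + ℓ • y = pF K ν ι deg (j+1) t + ℓ • pF K ν ι deg j y := by
      conv_lhs => rw [← pF_of_memHC K ν ι deg (homogCompF_iff_memHC K ν ι deg |>.mp hx2)]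
      rw [map_add, pF_smul K ν ι deg hℓ j y]
    have hφ : ℓ • pF K ν ι deg j y
        ∈ Submodule.map (phiL K ν ι ℓ) (homogCompF K ν ι deg j) :=
      ⟨pF K ν ι deg j y, (homogCompF_iff_memHC K ν ι deg).mpr (pF_memHC K ν ι deg j y), rfl⟩
    refine Submodule.mem_sup.mpr ⟨pF K ν ι deg (j+1) t, ⟨?_, ?_⟩, ℓ • pF K ν ι deg j y, hφ, hdec.symm⟩
    · exact hT t ht (j+1)
    · have : pF K ν ι deg (j+1) t = (t + ℓ • y) - ℓ • pF K ν ι deg j y := by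
        rw [hdec]; abel
      rw [this]
      exact Submodule.sub_mem _ hx2 (c1 K ν ι deg hℓ j hφ)
  · refine sup_le (inf_le_inf ?_ le_rfl) (le_inf ?_ (c1 K ν ι deg hℓ j))
    · exact fun x hx => Submodule.mem_sup_left hx
    · rintro x ⟨w, hw, rfl⟩
      refine Submodule.mem_sup_right ?_
      rw [smulTop_eq_range]
      exact ⟨w, rfl⟩

lemma c2zero (hT : CP K ν ι deg T) (hℓ : ℓ.IsHomogeneous 1) :
    Submodule.restrictScalars K
        (T ⊔ Ideal.span {ℓ} • (⊤ : Submodule (MvPolynomial (Fin ν) K) (FreeP K ν ι)))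
        ⊓ homogCompF K ν ι deg 0
      = Submodule.restrictScalars K T ⊓ homogCompF K ν ι deg 0 := by
  apply le_antisymm
  · rintro x ⟨hx1, hx2⟩
    replace hx1 : x ∈ T ⊔ Ideal.span {ℓ} • (⊤ : Submodule (MvPolynomial (Fin ν) K) (FreeP K ν ι)) := hx1
    replace hx2 : x ∈ homogCompF K ν ι deg 0 := hx2
    rw [smulTop_eq_range] at hx1
    obtain ⟨t, ht, s, hs, rfl⟩ := Submodule.mem_sup.mp hx1
    obtain ⟨y, rfl⟩ := hs
    rw [LinearMap.lsmul_apply] at *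
    have hdec : t + ℓ • y = pF K ν ι deg 0 t := by
      conv_lhs => rw [← pF_of_memHC K ν ι deg (homogCompF_iff_memHC K ν ι deg |>.mp hx2)]
      rw [map_add, pF_smul_lt K ν ι deg hℓ (by omega) y, add_zero]
    have : t + ℓ • y ∈ T := by rw [hdec]; exact hT t ht 0
    exact ⟨this, hx2⟩
  · exact inf_le_inf (fun x hx => Submodule.mem_sup_left hx) le_rfl

lemma c3 (hℓ : ℓ.IsHomogeneous 1) (j : ℕ) :
    (Submodule.restrictScalars K T ⊓ homogCompF K ν ι deg (j + 1))
        ⊓ Submodule.map (phiL K ν ι ℓ) (homogCompF K ν ι deg j)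
      = Submodule.map (phiL K ν ι ℓ)
          (Submodule.restrictScalars K (colonBy K ν ι T ℓ) ⊓ homogCompF K ν ι deg j) := by
  apply le_antisymm
  · rintro x ⟨⟨hxT, -⟩, w, hw, rfl⟩
    have hxT' : (phiL K ν ι ℓ) w ∈ T := hxT
    refine ⟨w, ⟨?_, hw⟩, rfl⟩
    exact hxT'
  · rintro x ⟨w, ⟨hw1, hw2⟩, rfl⟩
    have hw2' : w ∈ homogCompF K ν ι deg j := hw2
    refine ⟨⟨?_, c1 K ν ι deg hℓ j ⟨w, hw2', rfl⟩⟩, ⟨w, hw2', rfl⟩⟩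
    exact hw1

lemma c4 {j : ℕ} :
    LinearMap.ker (phiL K ν ι ℓ)
        ⊓ (Submodule.restrictScalars K (colonBy K ν ι T ℓ) ⊓ homogCompF K ν ι deg j)
      = LinearMap.ker (phiL K ν ι ℓ) ⊓ homogCompF K ν ι deg j := by
  apply le_antisymm
  · exact le_inf inf_le_left (le_trans inf_le_right inf_le_right)
  · rintro x ⟨hk, hx⟩
    have hk' : (phiL K ν ι ℓ) x = 0 := hk
    have hcol : x ∈ colonBy K ν ι T ℓ := by
      show ℓ • x ∈ T
      rw [← phiL_apply K ν ι ℓ x, hk']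
      exact Submodule.zero_mem T
    exact ⟨hk, hcol, hx⟩

end Step

section StepDim
variable {T : Submodule (MvPolynomial (Fin ν) K) (FreeP K ν ι)}
  {ℓ : MvPolynomial (Fin ν) K}

instance (U : Submodule K (FreeP K ν ι)) [FiniteDimensional K U]
    (g : FreeP K ν ι →ₗ[K] FreeP K ν ι) : FiniteDimensional K (Submodule.map g U) :=
  Module.Finite.map _ _

lemma coeff_step_succ (hT : CP K ν ι deg T) (hℓ : ℓ.IsHomogeneous 1) (j : ℕ) :
    Module.finrank K (Submodule.map (Submodule.restrictScalars K T).mkQ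
        (homogCompF K ν ι deg (j + 1)))
      = Module.finrank K (Submodule.map (Submodule.restrictScalars K
            (T ⊔ Ideal.span {ℓ} • (⊤ : Submodule (MvPolynomial (Fin ν) K) (FreeP K ν ι)))).mkQ
          (homogCompF K ν ι deg (j + 1)))
        + Module.finrank K (Submodule.map (Submodule.restrictScalars K (colonBy K ν ι T ℓ)).mkQ
          (homogCompF K ν ι deg j)) := by
  have E1 := dim_map_add K (Submodule.restrictScalars K T).mkQ (homogCompF K ν ι deg (j+1))
  have E2 := dim_map_add K (Submodule.restrictScalars K
      (T ⊔ Ideal.span {ℓ} • (⊤ : Submodule (MvPolynomial (Fin ν) K) (FreeP K ν ι)))).mkQ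
      (homogCompF K ν ι deg (j+1))
  have E3 := dim_map_add K (Submodule.restrictScalars K (colonBy K ν ι T ℓ)).mkQ
      (homogCompF K ν ι deg j)
  rw [Submodule.ker_mkQ] at E1 E2 E3
  have E4 := Submodule.finrank_sup_add_finrank_inf_eq
      (Submodule.restrictScalars K T ⊓ homogCompF K ν ι deg (j+1))
      (Submodule.map (phiL K ν ι ℓ) (homogCompF K ν ι deg j))
  rw [← c2 K ν ι deg hT hℓ j, c3 K ν ι deg hℓ j] at E4
  have E5 := dim_map_add K (phiL K ν ι ℓ) (homogCompF K ν ι deg j)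
  have E6 := dim_map_add K (phiL K ν ι ℓ)
      (Submodule.restrictScalars K (colonBy K ν ι T ℓ) ⊓ homogCompF K ν ι deg j)
  rw [c4] at E6
  omega

lemma coeff_step_zero (hT : CP K ν ι deg T) (hℓ : ℓ.IsHomogeneous 1) :
    Module.finrank K (Submodule.map (Submodule.restrictScalars K T).mkQ
        (homogCompF K ν ι deg 0))
      = Module.finrank K (Submodule.map (Submodule.restrictScalars K
            (T ⊔ Ideal.span {ℓ} • (⊤ : Submodule (MvPolynomial (Fin ν) K) (FreeP K ν ι)))).mkQ
          (homogCompF K ν ι deg 0)) := by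
  have E1 := dim_map_add K (Submodule.restrictScalars K T).mkQ (homogCompF K ν ι deg 0)
  have E2 := dim_map_add K (Submodule.restrictScalars K
      (T ⊔ Ideal.span {ℓ} • (⊤ : Submodule (MvPolynomial (Fin ν) K) (FreeP K ν ι)))).mkQ
      (homogCompF K ν ι deg 0)
  rw [Submodule.ker_mkQ] at E1 E2
  rw [c2zero K ν ι deg hT hℓ] at E2
  omega

lemma step (hT : CP K ν ι deg T) (hℓ : ℓ.IsHomogeneous 1) :
    hilbQ K ν ι deg T
      = hilbQ K ν ι deg
          (T ⊔ Ideal.span {ℓ} • (⊤ : Submodule (MvPolynomial (Fin ν) K) (FreeP K ν ι)))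
        + PowerSeries.X * hilbQ K ν ι deg (colonBy K ν ι T ℓ) := by
  ext n
  rw [map_add]
  cases n with
  | zero =>
    have : (PowerSeries.coeff 0) (PowerSeries.X * hilbQ K ν ι deg (colonBy K ν ι T ℓ)) = 0 := by
      simp
    rw [this, add_zero, hilbQ, hilbQ, PowerSeries.coeff_mk, PowerSeries.coeff_mk]
    exact_mod_cast coeff_step_zero K ν ι deg hT hℓ
  | succ j =>
    rw [PowerSeries.coeff_succ_X_mul, hilbQ, hilbQ, hilbQ,
      PowerSeries.coeff_mk, PowerSeries.coeff_mk, PowerSeries.coeff_mk]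
    exact_mod_cast coeff_step_succ K ν ι deg hT hℓ j

end StepDim

lemma colonBy_one (T : Submodule (MvPolynomial (Fin ν) K) (FreeP K ν ι)) :
    colonBy K ν ι T 1 = T := by
  ext x
  show (1 : MvPolynomial (Fin ν) K) • x ∈ T ↔ x ∈ T
  rw [one_smul]

lemma colonBy_mul (T : Submodule (MvPolynomial (Fin ν) K) (FreeP K ν ι))
    (f g : MvPolynomial (Fin ν) K) :
    colonBy K ν ι (colonBy K ν ι T f) g = colonBy K ν ι T (f * g) := by
  ext x
  show f • (g • x) ∈ T ↔ (f * g) • x ∈ T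
  rw [smul_smul]

lemma mk_one_mul : (PowerSeries.mk fun _ => (1:ℤ)) * (1 - PowerSeries.X) = 1 := by
  ext n
  rw [mul_sub, mul_one, map_sub]
  cases n with
  | zero => simp
  | succ j => simp [PowerSeries.coeff_succ_mul_X]

lemma solve_geom {H B : PowerSeries ℤ} (h : H = B + PowerSeries.X * H) :
    H = B * PowerSeries.mk fun _ => (1:ℤ) := by
  have h2 : H * (1 - PowerSeries.X) = B := by
    rw [mul_sub, mul_one]; nth_rewrite 1 [h]; ring
  calc H = H * ((1 - PowerSeries.X) * PowerSeries.mk fun _ => (1:ℤ)) := by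
            rw [mul_comm (1 - PowerSeries.X), mk_one_mul, mul_one]
       _ = (H * (1 - PowerSeries.X)) * PowerSeries.mk fun _ => (1:ℤ) := by ring
       _ = B * PowerSeries.mk fun _ => (1:ℤ) := by rw [h2]

theorem main_ind (ℓ : MvPolynomial (Fin ν) K) (hℓ : ℓ.IsHomogeneous 1) (r : ℕ) :
    ∀ (T : Submodule (MvPolynomial (Fin ν) K) (FreeP K ν ι)), CP K ν ι deg T →
    colonBy K ν ι T (ℓ ^ r) = colonBy K ν ι T (ℓ ^ (r + 1)) →
    hilbQ K ν ι deg T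
      = (∑ e ∈ Finset.range r,
          hilbQ K ν ι deg
              (colonBy K ν ι T (ℓ ^ e) ⊔
                (Ideal.span {ℓ} • (⊤ : Submodule (MvPolynomial (Fin ν) K) (FreeP K ν ι))))
            * PowerSeries.X ^ e)
        + hilbQ K ν ι deg
            (colonBy K ν ι T (ℓ ^ r) ⊔
              (Ideal.span {ℓ} • (⊤ : Submodule (MvPolynomial (Fin ν) K) (FreeP K ν ι))))
          * PowerSeries.X ^ r * PowerSeries.mk (fun _ => (1 : ℤ)) := by
  induction r with
  | zero =>
    intro T hT hr
    rw [pow_zero, colonBy_one] at hr ⊢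
    rw [pow_one] at hr
    have hstep := step K ν ι deg hT hℓ
    rw [← hr] at hstep
    rw [Finset.range_zero, Finset.sum_empty, zero_add, pow_zero, mul_one]
    exact solve_geom hstep
  | succ r ih =>
    intro T hT hr
    have hT' := CP_colon K ν ι deg hT hℓ
    have hA : ∀ e, colonBy K ν ι (colonBy K ν ι T ℓ) (ℓ ^ e) = colonBy K ν ι T (ℓ ^ (e + 1)) :=
      fun e => by rw [colonBy_mul, ← pow_succ']
    have hr' : colonBy K ν ι (colonBy K ν ι T ℓ) (ℓ ^ r)
        = colonBy K ν ι (colonBy K ν ι T ℓ) (ℓ ^ (r + 1)) := by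
      rw [hA, hA]; exact hr
    have ihh := ih (colonBy K ν ι T ℓ) hT' hr'
    simp only [hA] at ihh
    have hstep := step K ν ι deg hT hℓ
    rw [ihh] at hstep
    rw [hstep]
    rw [Finset.sum_range_succ']
    have h0 : colonBy K ν ι T (ℓ ^ 0) = T := by rw [pow_zero, colonBy_one]
    rw [h0, mul_add, Finset.mul_sum]
    rw [pow_zero, mul_one]
    have hterm : ∀ e, PowerSeries.X * (hilbQ K ν ι deg
          (colonBy K ν ι T (ℓ ^ (e+1)) ⊔
            (Ideal.span {ℓ} • (⊤ : Submodule (MvPolynomial (Fin ν) K) (FreeP K ν ι))))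
          * PowerSeries.X ^ e)
        = hilbQ K ν ι deg
          (colonBy K ν ι T (ℓ ^ (e+1)) ⊔
            (Ideal.span {ℓ} • (⊤ : Submodule (MvPolynomial (Fin ν) K) (FreeP K ν ι))))
          * PowerSeries.X ^ (e+1) := fun e => by ring
    simp only [hterm]
    ring

/-- **Repeated division by a linear form** (Lemma 4.5).
Let `T` be a graded submodule of the finitely generated graded free module `F` (with
basis of non-negative degrees) over `P = K[x_1,…,x_ν]`, and let `ℓ ∈ P` be a linear form
with `T : ℓ^r = T : ℓ^{r+1}` for some `r ≥ 0`.  Then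
`H_{F/T}(t) = Σ_{e=0}^{r-1} H_{F/(T:ℓ^e + ℓF)}(t)·t^e + H_{F/(T:ℓ^r + ℓF)}(t)·t^r/(1-t)`
in `ℤ[[t]]`, where `1/(1-t) = Σ_{k≥0} t^k`. -/
theorem hilbert_series_repeated_division
    (T : Submodule (MvPolynomial (Fin ν) K) (FreeP K ν ι))
    (hT : IsGradedSub K ν ι deg T)
    (ℓ : MvPolynomial (Fin ν) K) (hℓ : ℓ.IsHomogeneous 1)
    (r : ℕ) (hr : colonBy K ν ι T (ℓ ^ r) = colonBy K ν ι T (ℓ ^ (r + 1))) :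
    hilbQ K ν ι deg T
      = (∑ e ∈ Finset.range r,
          hilbQ K ν ι deg
              (colonBy K ν ι T (ℓ ^ e) ⊔
                (Ideal.span {ℓ} • (⊤ : Submodule (MvPolynomial (Fin ν) K) (FreeP K ν ι))))
            * PowerSeries.X ^ e)
        + hilbQ K ν ι deg
            (colonBy K ν ι T (ℓ ^ r) ⊔
              (Ideal.span {ℓ} • (⊤ : Submodule (MvPolynomial (Fin ν) K) (FreeP K ν ι))))
          * PowerSeries.X ^ r * PowerSeries.mk (fun _ => (1 : ℤ)) := by
  have hCP : CP K ν ι deg T := CP_of_graded K ν ι deg hT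
  exact main_ind K ν ι deg ℓ hℓ r T hCP hr

end
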